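/- Let P be a PMF on a countable alphabet whose support has size S(P), with every support probability at least 1/κ. Let Ŝ(n) be the number of distinct symbols among n i.i.d. samples. Then for any δ ∈ (0,1), with probability at least 1 − δ: Ŝ(n) ≤ S(P) ≤ (Ŝ(n) + sqrt((n/2)·log(1/δ)))·(1 − e^{−n/κ})^{−1}. -/

import Mathlib

open Real

/-- Core inequality for Hoeffding's lemma. -/
lemma stmt17_core_ineq (q h : ℝ) (hq0 : 0 ≤ q) (hq1 : q ≤ 1) (hh : 0 ≤ h) :
    (1 - q) * Real.exp (-q * h) + q * Real.exp ((1 - q) * h) ≤ Real.exp (h ^ 2 / 8) := by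
  set d : ℝ → ℝ := fun x => 1 - q + q * Real.exp x with hd_def
  have hd : ∀ x, 0 < d x := by
    intro x
    rcases eq_or_lt_of_le hq1 with h1 | h1
    · subst h1; simpa [hd_def] using Real.exp_pos x
    · have := Real.exp_pos x
      have : 0 ≤ q * Real.exp x := mul_nonneg hq0 this.le
      simp only [hd_def]; linarith
  -- rewrite LHS as exp(-q h) * d h
  have hLHS : (1 - q) * Real.exp (-q * h) + q * Real.exp ((1 - q) * h)
      = Real.exp (-q * h) * d h := by
    have : Real.exp ((1 - q) * h) = Real.exp (-q * h) * Real.exp h := by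
      rw [← Real.exp_add]; ring_nf
    rw [this, hd_def]; ring
  rw [hLHS]
  -- suffices : log version
  set G : ℝ → ℝ := fun x => x ^ 2 / 8 + q * x - Real.log (d x) with hG_def
  set G1 : ℝ → ℝ := fun x => x / 4 + q - q * Real.exp x / d x with hG1_def
  have hdG : ∀ x, HasDerivAt d (q * Real.exp x) x := fun x =>
    ((Real.hasDerivAt_exp x).const_mul q).const_add (1 - q)
  have hG : ∀ x, HasDerivAt G (G1 x) x := by
    intro x
    have h1 : HasDerivAt (fun x : ℝ => x ^ 2 / 8) (x / 4) x := by
      have := (hasDerivAt_pow 2 x).div_const 8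
      exact this.congr_deriv (by rw [show (2:ℕ) - 1 = 1 from rfl]; push_cast; ring)
    have h2 : HasDerivAt (fun x : ℝ => q * x) q x := by
      simpa using (hasDerivAt_id x).const_mul q
    have h3 : HasDerivAt (fun x => Real.log (d x)) (q * Real.exp x / d x) x :=
      (hdG x).log (hd x).ne'
    exact (h1.add h2).sub h3
  have hG1 : ∀ x, HasDerivAt G1
      (1 / 4 - (q * Real.exp x * d x - q * Real.exp x * (q * Real.exp x)) / (d x) ^ 2) x := by
    intro x
    have h1 : HasDerivAt (fun x : ℝ => x / 4 + q) (1 / 4) x := by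
      simpa using (hasDerivAt_id x).div_const 4 |>.add_const q
    have h2 : HasDerivAt (fun x => q * Real.exp x / d x)
        ((q * Real.exp x * d x - q * Real.exp x * (q * Real.exp x)) / (d x) ^ 2) x :=
      ((Real.hasDerivAt_exp x).const_mul q).div (hdG x) (hd x).ne'
    exact h1.sub h2
  have hG1nonneg : ∀ x, 0 ≤ 1 / 4 -
      (q * Real.exp x * d x - q * Real.exp x * (q * Real.exp x)) / (d x) ^ 2 := by
    intro x
    have hdx := hd x
    have key : q * Real.exp x * d x - q * Real.exp x * (q * Real.exp x) ≤ (d x) ^ 2 / 4 := by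
      have hex := Real.exp_pos x
      simp only [hd_def]
      nlinarith [sq_nonneg (1 - q - q * Real.exp x)]
    have h2 : (q * Real.exp x * d x - q * Real.exp x * (q * Real.exp x)) / (d x) ^ 2 ≤ 1 / 4 := by
      rw [div_le_iff₀ (by positivity)]
      linarith [key]
    linarith
  have hG1mono : Monotone G1 :=
    monotone_of_deriv_nonneg (fun x => (hG1 x).differentiableAt)
      (fun x => by rw [(hG1 x).deriv]; exact hG1nonneg x)
  have hG1_zero : G1 0 = 0 := by simp [hG1_def, hd_def]
  have hGmono : MonotoneOn G (Set.Ici 0) := by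
    apply monotoneOn_of_deriv_nonneg (convex_Ici 0)
    · exact (Differentiable.continuous fun x => (hG x).differentiableAt).continuousOn
    · exact fun x _ => ((hG x).differentiableAt).differentiableWithinAt
    · intro x hx
      rw [(hG x).deriv]
      rw [interior_Ici] at hx
      have : G1 0 ≤ G1 x := hG1mono (le_of_lt hx)
      linarith [hG1_zero ▸ this]
  have hG_zero : G 0 = 0 := by simp [hG_def, hd_def]
  have hGh : 0 ≤ G h := by
    have := hGmono (Set.self_mem_Ici) (Set.mem_Ici.2 hh) hh
    linarith [hG_zero ▸ this]
  -- conclude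
  have hlog : Real.log (d h) ≤ h ^ 2 / 8 + q * h := by
    simp only [hG_def] at hGh; linarith
  have : d h ≤ Real.exp (h ^ 2 / 8 + q * h) := by
    rw [← Real.exp_log (hd h)]
    exact Real.exp_le_exp.2 hlog
  calc Real.exp (-q * h) * d h ≤ Real.exp (-q * h) * Real.exp (h ^ 2 / 8 + q * h) := by
        exact mul_le_mul_of_nonneg_left this (Real.exp_nonneg _)
    _ = Real.exp (h ^ 2 / 8) := by rw [← Real.exp_add]; ring_nf

open Real MeasureTheory

lemma stmt17_exp_convex (l a x : ℝ) (h1 : a ≤ x) (h2 : x ≤ a + 1) :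
    Real.exp (l * x) ≤ (a + 1 - x) * Real.exp (l * a) + (x - a) * Real.exp (l * (a + 1)) := by
  have := convexOn_exp.2 (Set.mem_univ (l * a)) (Set.mem_univ (l * (a + 1)))
    (by linarith : (0:ℝ) ≤ a + 1 - x) (by linarith : (0:ℝ) ≤ x - a) (by ring)
  simp only [smul_eq_mul] at this
  rw [show l * x = (a + 1 - x) * (l * a) + (x - a) * (l * (a + 1)) by ring]
  exact this

lemma stmt17_int_bdd {α : Type*} [MeasurableSpace α] (μ : Measure α) [IsFiniteMeasure μ]
    {f : α → ℝ} (hm : Measurable f) (C : ℝ) (h : ∀ x, |f x| ≤ C) : Integrable f μ := by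
  refine Integrable.mono' (integrable_const C) hm.aestronglyMeasurable ?_
  exact ae_of_all _ fun x => by rw [Real.norm_eq_abs]; exact h x

/-- Hoeffding's lemma, for a function with range in an interval of length 1,
Bochner integral form. -/
lemma stmt17_hoeffding {α : Type*} [MeasurableSpace α] (ν : Measure α)
    [IsProbabilityMeasure ν] (h : α → ℝ) (hm : Measurable h) (c : ℝ)
    (hlb : ∀ y, c ≤ h y) (hub : ∀ y, h y ≤ c + 1) (l : ℝ) :
    ∫ y, Real.exp (l * ((∫ z, h z ∂ν) - h y)) ∂ν ≤ Real.exp (l ^ 2 / 8) := by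
  have hint : Integrable h ν := by
    refine stmt17_int_bdd ν hm (|c| + 1) fun x => ?_
    rw [abs_le]; constructor
    · have := hlb x; have := neg_abs_le c; linarith
    · have := hub x; have := le_abs_self c; linarith
  set m := ∫ z, h z ∂ν with hm_def
  have hmint : ∀ (r : ℝ), ∫ (_ : α), r ∂ν = r := by
    intro r; simp [integral_const]
  have hm_lb : c ≤ m := by
    rw [hm_def, ← hmint c]
    exact integral_mono (integrable_const c) hint hlb
  have hm_ub : m ≤ c + 1 := by
    rw [hm_def, ← hmint (c + 1)]
    exact integral_mono hint (integrable_const (c + 1)) hub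
  set a : ℝ := m - c - 1 with ha_def
  set X : α → ℝ := fun y => m - h y with hX_def
  have hXlb : ∀ y, a ≤ X y := fun y => by simp only [hX_def, ha_def]; linarith [hub y]
  have hXub : ∀ y, X y ≤ a + 1 := fun y => by simp only [hX_def, ha_def]; linarith [hlb y]
  have hXint : Integrable X ν := (integrable_const m).sub hint
  have hXmean : ∫ y, X y ∂ν = 0 := by
    rw [hX_def]; simp only
    rw [integral_sub (integrable_const m) hint, hmint m, ← hm_def, sub_self]
  have ha0 : a ≤ 0 := by linarith
  have ha1 : -1 ≤ a := by linarith
  -- pointwise bound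
  have hpt : ∀ y, Real.exp (l * X y) ≤
      (a + 1 - X y) * Real.exp (l * a) + (X y - a) * Real.exp (l * (a + 1)) :=
    fun y => stmt17_exp_convex l a (X y) (hXlb y) (hXub y)
  have hXmeas : Measurable X := measurable_const.sub hm
  have hintL : Integrable (fun y => Real.exp (l * X y)) ν := by
    refine stmt17_int_bdd ν (by fun_prop) (Real.exp (|l| * (|a| + 1))) fun y => ?_
    rw [abs_of_nonneg (Real.exp_nonneg _)]
    apply Real.exp_le_exp.2
    calc l * X y ≤ |l * X y| := le_abs_self _
      _ = |l| * |X y| := abs_mul _ _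
      _ ≤ |l| * (|a| + 1) := by
          apply mul_le_mul_of_nonneg_left _ (abs_nonneg l)
          rw [abs_le]; constructor
          · have := hXlb y; have := neg_abs_le a; linarith
          · have := hXub y; have := le_abs_self a; linarith
  have hi1 : Integrable (fun y => (a + 1 - X y) * Real.exp (l * a)) ν :=
    ((integrable_const (a + 1)).sub hXint).mul_const _
  have hi2 : Integrable (fun y => (X y - a) * Real.exp (l * (a + 1))) ν :=
    (hXint.sub (integrable_const a)).mul_const _
  have hintR : Integrable
      (fun y => (a + 1 - X y) * Real.exp (l * a) + (X y - a) * Real.exp (l * (a + 1))) ν :=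
    hi1.add hi2
  have hIR : ∫ y, ((a + 1 - X y) * Real.exp (l * a) + (X y - a) * Real.exp (l * (a + 1))) ∂ν
      = (a + 1) * Real.exp (l * a) + (-a) * Real.exp (l * (a + 1)) := by
    rw [integral_add hi1 hi2, integral_mul_const, integral_mul_const,
      integral_sub (integrable_const (a+1)) hXint, integral_sub hXint (integrable_const a),
      hXmean, hmint, hmint]
    ring
  calc ∫ y, Real.exp (l * (m - h y)) ∂ν = ∫ y, Real.exp (l * X y) ∂ν := rfl
    _ ≤ ∫ y, ((a + 1 - X y) * Real.exp (l * a) + (X y - a) * Real.exp (l * (a + 1))) ∂ν :=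
        integral_mono hintL hintR hpt
    _ = (a + 1) * Real.exp (l * a) + (-a) * Real.exp (l * (a + 1)) := hIR
    _ ≤ Real.exp (l ^ 2 / 8) := by
        rcases le_or_gt 0 l with hl | hl
        · have := stmt17_core_ineq (-a) l (by linarith) (by linarith) hl
          have e1 : -(-a) * l = l * a := by ring
          have e2 : (1 - -a) * l = l * (a + 1) := by ring
          rw [e1, e2] at this
          linarith
        · have := stmt17_core_ineq (a + 1) (-l) (by linarith) (by linarith) (by linarith)
          have e1 : -(a + 1) * -l = l * (a + 1) := by ring
          have e2 : (1 - (a + 1)) * -l = l * a := by ring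
          have e3 : (-l) ^ 2 / 8 = l ^ 2 / 8 := by ring
          rw [e1, e2, e3] at this
          linarith

open Real MeasureTheory

section Infra

variable {Y : Type*} [Countable Y] [MeasurableSpace Y] [MeasurableSingletonClass Y]

instance stmt17_msc {ι : Type*} [Countable ι] : MeasurableSingletonClass (ι → Y) := by
  constructor
  intro f
  have : {f} = Set.pi Set.univ (fun i => {f i}) := by
    ext g; simp [Set.mem_pi, funext_iff, eq_comm]
  rw [this]
  exact MeasurableSet.univ_pi fun i => measurableSet_singleton _

/-- bounded differences property with constant 1 -/
def Stmt17BddDiff {n : ℕ} (f : (Fin n → Y) → ℝ) : Prop :=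
  ∀ (ω : Fin n → Y) (i : Fin n) (y : Y), |f (Function.update ω i y) - f ω| ≤ 1

lemma stmt17_bdd_aux {n : ℕ} {f : (Fin n → Y) → ℝ} (hf : Stmt17BddDiff f)
    (s : Finset (Fin n)) :
    ∀ ω ω' : Fin n → Y, (∀ i ∉ s, ω i = ω' i) → |f ω - f ω'| ≤ s.card := by
  induction s using Finset.induction with
  | empty =>
    intro ω ω' hag
    have : ω = ω' := funext fun i => hag i (Finset.notMem_empty i)
    simp [this]
  | @insert a s ha ih =>
    intro ω ω' hag
    set ω'' := Function.update ω a (ω' a) with hω''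
    have h1 : |f ω'' - f ω| ≤ 1 := hf ω a (ω' a)
    have h2 : |f ω'' - f ω'| ≤ s.card := by
      apply ih
      intro i hi
      rcases eq_or_ne i a with rfl | hne
      · simp [hω'']
      · rw [hω'', Function.update_of_ne hne]
        exact hag i (by simp [hi, hne])
    calc |f ω - f ω'| ≤ |f ω - f ω''| + |f ω'' - f ω'| := abs_sub_le _ _ _
      _ ≤ 1 + s.card := by rw [abs_sub_comm (f ω)]; exact add_le_add h1 h2
      _ = ((insert a s).card : ℝ) := by
        rw [Finset.card_insert_of_notMem ha]; push_cast; ring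

lemma stmt17_bdd_global {n : ℕ} {f : (Fin n → Y) → ℝ} (hf : Stmt17BddDiff f)
    (ω ω' : Fin n → Y) : |f ω - f ω'| ≤ n := by
  have := stmt17_bdd_aux hf Finset.univ ω ω' (by simp)
  simpa using this

lemma stmt17_bdd_bounded {n : ℕ} {f : (Fin n → Y) → ℝ} (hf : Stmt17BddDiff f)
    (ω₀ : Fin n → Y) (ω : Fin n → Y) : |f ω| ≤ |f ω₀| + n := by
  have := stmt17_bdd_global hf ω ω₀
  calc |f ω| = |f ω₀ + (f ω - f ω₀)| := by ring_nf
    _ ≤ |f ω₀| + |f ω - f ω₀| := abs_add_le _ _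
    _ ≤ |f ω₀| + n := by linarith

lemma stmt17_mean_dev {α : Type*} [MeasurableSpace α] (μ : Measure α)
    [IsProbabilityMeasure μ] (f : α → ℝ) (hint : Integrable f μ) (C : ℝ)
    (h : ∀ z w, |f z - f w| ≤ C) (ω : α) : |(∫ z, f z ∂μ) - f ω| ≤ C := by
  have h0 : (∫ z, f z ∂μ) - f ω = ∫ z, (f z - f ω) ∂μ := by
    rw [integral_sub hint (integrable_const (f ω))]
    simp [integral_const]
  rw [h0]
  have := norm_integral_le_of_norm_le_const (μ := μ) (f := fun z => f z - f ω) (C := C)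
    (ae_of_all _ fun z => by rw [Real.norm_eq_abs]; exact h z ω)
  simpa [Real.norm_eq_abs] using this

end Infra

open Real MeasureTheory

section McD

variable {Y : Type*} [Countable Y] [MeasurableSpace Y] [MeasurableSingletonClass Y]

lemma stmt17_insertNth_update {n : ℕ} (i : Fin (n + 1)) (x : Y) (f : Fin n → Y)
    (j : Fin n) (z : Y) :
    Fin.insertNth i x (Function.update f j z)
      = Function.update (Fin.insertNth i x f : Fin (n+1) → Y) (i.succAbove j) z := by
  ext k
  by_cases hk : k = i.succAbove j
  · subst hk
    rw [Fin.insertNth_apply_succAbove, Function.update_self, Function.update_self]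
  · rw [Function.update_of_ne hk]
    by_cases hki : k = i
    · subst hki
      rw [Fin.insertNth_apply_same, Fin.insertNth_apply_same]
    · obtain ⟨j', rfl⟩ := Fin.exists_succAbove_eq hki
      have hj' : j' ≠ j := fun h => hk (by rw [h])
      rw [Fin.insertNth_apply_succAbove, Fin.insertNth_apply_succAbove,
        Function.update_of_ne hj']

lemma stmt17_mcdiarmid_mgf (p : PMF Y) (n : ℕ) (f : (Fin n → Y) → ℝ)
    (hbd : Stmt17BddDiff f) (l : ℝ) (hl : 0 ≤ l) :
    ∫⁻ ω, ENNReal.ofReal (Real.exp (l *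
        ((∫ z, f z ∂(Measure.pi fun _ : Fin n => p.toMeasure)) - f ω)))
        ∂(Measure.pi fun _ : Fin n => p.toMeasure)
      ≤ ENNReal.ofReal (Real.exp (l ^ 2 * n / 8)) := by
  induction n with
  | zero =>
    have hconst : ∀ ω : Fin 0 → Y, f ω = f default := fun ω => by
      rw [Subsingleton.elim ω default]
    have hint : ∫ z, f z ∂(Measure.pi fun _ : Fin 0 => p.toMeasure) = f default := by
      rw [show f = fun _ => f default from funext hconst]
      simp [integral_const]
    rw [hint]
    have heq : ∀ ω : Fin 0 → Y,
        ENNReal.ofReal (Real.exp (l * (f default - f ω))) = 1 := fun ω => by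
      rw [hconst ω]; simp
    rw [lintegral_congr heq]
    simp
  | succ n ih =>
    -- setup
    obtain ⟨y₀, _⟩ := p.support_nonempty
    set ν := p.toMeasure with hν
    set μn := Measure.pi (fun _ : Fin n => ν) with hμn
    set μN := Measure.pi (fun _ : Fin (n+1) => ν) with hμN
    set e := MeasurableEquiv.piFinSuccAbove (fun _ : Fin (n+1) => Y) 0 with he
    have mp : MeasurePreserving e μN (ν.prod μn) :=
      measurePreserving_piFinSuccAbove (fun _ : Fin (n+1) => ν) 0
    have hesymm : ∀ (y : Y) (ω' : Fin n → Y),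
        e.symm (y, ω') = Fin.insertNth 0 y ω' := fun y ω' => rfl
    set C : ℝ := |f (fun _ => y₀)| + ((n+1 : ℕ) : ℝ) with hC
    have hfb : ∀ ω, |f ω| ≤ C := stmt17_bdd_bounded hbd _
    have hfm : Measurable f := measurable_of_countable f
    have hintf : Integrable f μN := stmt17_int_bdd μN hfm C hfb
    set m := ∫ z, f z ∂μN with hm
    set g : (Fin n → Y) → ℝ := fun ω' => ∫ y, f (e.symm (y, ω')) ∂ν with hg
    have hgm : Measurable g := measurable_of_countable g
    -- single-coordinate variation
    have hvar : ∀ (ω' : Fin n → Y) (y y₂ : Y),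
        |f (e.symm (y, ω')) - f (e.symm (y₂, ω'))| ≤ 1 := by
      intro ω' y y₂
      have hupd : e.symm (y, ω') = Function.update (e.symm (y₂, ω')) 0 y := by
        rw [hesymm, hesymm, Fin.update_insertNth]
      rw [hupd]
      exact hbd _ 0 y
    have hsecm : ∀ ω' : Fin n → Y, Measurable (fun y => f (e.symm (y, ω'))) :=
      fun ω' => measurable_of_countable _
    have hsecint : ∀ ω' : Fin n → Y, Integrable (fun y => f (e.symm (y, ω'))) ν :=
      fun ω' => stmt17_int_bdd ν (hsecm ω') C (fun y => hfb _)
    -- |g ω' - f (e.symm (y, ω'))| ≤ 1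
    have hgdev : ∀ (ω' : Fin n → Y) (y : Y), |g ω' - f (e.symm (y, ω'))| ≤ 1 := by
      intro ω' y
      exact stmt17_mean_dev ν _ (hsecint ω') 1 (fun z w => hvar ω' z w) y
    -- inner Hoeffding bound
    have hinner : ∀ ω' : Fin n → Y,
        ∫⁻ y, ENNReal.ofReal (Real.exp (l * (g ω' - f (e.symm (y, ω'))))) ∂ν
          ≤ ENNReal.ofReal (Real.exp (l ^ 2 / 8)) := by
      intro ω'
      set c : ℝ := sInf (Set.range fun y => f (e.symm (y, ω'))) with hc
      have hbdd : BddBelow (Set.range fun y => f (e.symm (y, ω'))) := by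
        refine ⟨f (e.symm (y₀, ω')) - 1, ?_⟩
        rintro x ⟨y, rfl⟩
        have := hvar ω' y₀ y
        rw [abs_le] at this
        linarith [this.1]
      have hne : (Set.range fun y => f (e.symm (y, ω'))).Nonempty := ⟨_, ⟨y₀, rfl⟩⟩
      have hlb : ∀ y, c ≤ f (e.symm (y, ω')) := fun y => csInf_le hbdd ⟨y, rfl⟩
      have hub : ∀ y, f (e.symm (y, ω')) ≤ c + 1 := by
        intro y
        have : f (e.symm (y, ω')) - 1 ≤ c := by
          apply le_csInf hne
          rintro x ⟨y₂, rfl⟩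
          have := hvar ω' y y₂
          rw [abs_le] at this
          linarith [this.1]
        linarith
      have hB := stmt17_hoeffding ν (fun y => f (e.symm (y, ω'))) (hsecm ω') c hlb hub l
      have hint : Integrable (fun y => Real.exp (l * (g ω' - f (e.symm (y, ω'))))) ν := by
        refine stmt17_int_bdd ν (by fun_prop) (Real.exp l) fun y => ?_
        rw [abs_of_nonneg (Real.exp_nonneg _)]
        apply Real.exp_le_exp.2
        have h1 := hgdev ω' y
        rw [abs_le] at h1
        nlinarith [h1.2]
      rw [← ofReal_integral_eq_lintegral_ofReal hint (ae_of_all _ fun y => Real.exp_nonneg _)]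
      exact ENNReal.ofReal_le_ofReal hB
    -- g has bounded differences
    have hgbd : Stmt17BddDiff g := by
      intro ω' j y
      have key : ∀ y₂ : Y, f (e.symm (y₂, Function.update ω' j y))
          = f (Function.update (e.symm (y₂, ω')) ((0 : Fin (n+1)).succAbove j) y) := by
        intro y₂
        rw [hesymm, hesymm, stmt17_insertNth_update]
      have hintu : Integrable (fun y₂ => f (e.symm (y₂, Function.update ω' j y))) ν :=
        hsecint _
      have hdiff : g (Function.update ω' j y) - g ω'
          = ∫ y₂, (f (e.symm (y₂, Function.update ω' j y)) - f (e.symm (y₂, ω'))) ∂ν := by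
        rw [integral_sub hintu (hsecint ω')]
      rw [hdiff]
      have := norm_integral_le_of_norm_le_const (μ := ν)
        (f := fun y₂ => f (e.symm (y₂, Function.update ω' j y)) - f (e.symm (y₂, ω')))
        (C := 1) (ae_of_all _ fun y₂ => by
          rw [Real.norm_eq_abs]
          show |f (e.symm (y₂, Function.update ω' j y)) - f (e.symm (y₂, ω'))| ≤ 1
          rw [key y₂]
          exact hbd _ _ _)
      simpa [Real.norm_eq_abs] using this
    -- mean equality
    have hintF : Integrable (fun z : Y × (Fin n → Y) => f (e.symm z)) (ν.prod μn) :=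
      stmt17_int_bdd _ (measurable_of_countable _) C (fun z => hfb _)
    have hm_eq : m = ∫ ω', g ω' ∂μn := by
      have h1 : m = ∫ z, f (e.symm z) ∂(ν.prod μn) := by
        rw [hm, ← mp.map_eq, integral_map e.measurable.aemeasurable
          (measurable_of_countable _).aestronglyMeasurable]
        simp
      rw [h1, integral_prod_symm _ hintF]
    -- main chain
    calc ∫⁻ ω, ENNReal.ofReal (Real.exp (l * (m - f ω))) ∂μN
        = ∫⁻ z, ENNReal.ofReal (Real.exp (l * (m - f (e.symm z)))) ∂(ν.prod μn) := by
          rw [← mp.map_eq, lintegral_map (measurable_of_countable _) e.measurable]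
          simp
      _ = ∫⁻ ω', ∫⁻ y, ENNReal.ofReal (Real.exp (l * (m - f (e.symm (y, ω'))))) ∂ν ∂μn :=
          lintegral_prod_symm _ (measurable_of_countable _).aemeasurable
      _ = ∫⁻ ω', ENNReal.ofReal (Real.exp (l * (m - g ω')))
            * ∫⁻ y, ENNReal.ofReal (Real.exp (l * (g ω' - f (e.symm (y, ω'))))) ∂ν ∂μn := by
          apply lintegral_congr
          intro ω'
          rw [← lintegral_const_mul _ (measurable_of_countable _)]
          apply lintegral_congr
          intro y
          rw [← ENNReal.ofReal_mul (Real.exp_nonneg _), ← Real.exp_add]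
          congr 2
          ring
      _ ≤ ∫⁻ ω', ENNReal.ofReal (Real.exp (l * (m - g ω')))
            * ENNReal.ofReal (Real.exp (l ^ 2 / 8)) ∂μn :=
          lintegral_mono fun ω' => mul_le_mul_right (hinner ω') _
      _ = ENNReal.ofReal (Real.exp (l ^ 2 / 8))
            * ∫⁻ ω', ENNReal.ofReal (Real.exp (l * (m - g ω'))) ∂μn := by
          simp_rw [mul_comm]
          rw [lintegral_const_mul _ (measurable_of_countable _)]
      _ ≤ ENNReal.ofReal (Real.exp (l ^ 2 / 8)) * ENNReal.ofReal (Real.exp (l ^ 2 * n / 8)) := by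
          apply mul_le_mul_right
          have := ih g hgbd
          rw [hm_eq]
          exact this
      _ = ENNReal.ofReal (Real.exp (l ^ 2 * (n + 1 : ℕ) / 8)) := by
          rw [← ENNReal.ofReal_mul (Real.exp_nonneg _), ← Real.exp_add]
          congr 2
          push_cast
          ring

end McD

open Real MeasureTheory

section Tail

variable {Y : Type*} [Countable Y] [MeasurableSpace Y] [MeasurableSingletonClass Y]

lemma stmt17_tail (p : PMF Y) (n : ℕ) (hn : 0 < n) (f : (Fin n → Y) → ℝ)
    (hbd : Stmt17BddDiff f) (ε : ℝ) (hε : 0 ≤ ε) :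
    ((Measure.pi fun _ : Fin n => p.toMeasure)
        {ω | ε ≤ (∫ z, f z ∂(Measure.pi fun _ : Fin n => p.toMeasure)) - f ω}).toReal
      ≤ Real.exp (-2 * ε ^ 2 / n) := by
  set μ := Measure.pi fun _ : Fin n => p.toMeasure with hμ
  set m := ∫ z, f z ∂μ with hm
  set l : ℝ := 4 * ε / n with hl_def
  have hn' : (0:ℝ) < n := Nat.cast_pos.2 hn
  have hl : 0 ≤ l := by positivity
  have hmgf := stmt17_mcdiarmid_mgf p n f hbd l hl
  have hsub : {ω : Fin n → Y | ε ≤ m - f ω}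
      ⊆ {ω : Fin n → Y | ENNReal.ofReal (Real.exp (l * ε))
          ≤ ENNReal.ofReal (Real.exp (l * (m - f ω)))} := fun ω hω =>
    ENNReal.ofReal_le_ofReal (Real.exp_le_exp.2 (mul_le_mul_of_nonneg_left hω hl))
  have key := mul_meas_ge_le_lintegral₀
    (μ := μ) (f := fun ω => ENNReal.ofReal (Real.exp (l * (m - f ω))))
    (measurable_of_countable _).aemeasurable (ENNReal.ofReal (Real.exp (l * ε)))
  have h2 : ENNReal.ofReal (Real.exp (l * ε)) * μ {ω | ε ≤ m - f ω}
      ≤ ENNReal.ofReal (Real.exp (l ^ 2 * n / 8)) :=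
    le_trans (mul_le_mul_right (measure_mono hsub) _) (le_trans key hmgf)
  have h3 : μ {ω | ε ≤ m - f ω}
      ≤ ENNReal.ofReal (Real.exp (l ^ 2 * n / 8)) / ENNReal.ofReal (Real.exp (l * ε)) := by
    rw [ENNReal.le_div_iff_mul_le
      (Or.inl (by simp [ENNReal.ofReal_eq_zero, not_le, Real.exp_pos]))
      (Or.inl ENNReal.ofReal_ne_top)]
    rw [mul_comm]
    exact h2
  have h4 : ENNReal.ofReal (Real.exp (l ^ 2 * n / 8)) / ENNReal.ofReal (Real.exp (l * ε))
      = ENNReal.ofReal (Real.exp (-2 * ε ^ 2 / n)) := by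
    rw [← ENNReal.ofReal_div_of_pos (Real.exp_pos _), ← Real.exp_sub]
    congr 1
    rw [hl_def]
    field_simp
    ring
  exact ENNReal.toReal_le_of_le_ofReal (Real.exp_nonneg _) (h4 ▸ h3)

end Tail

open Real MeasureTheory
open scoped ENNReal

section Stats

variable {Y : Type*} [Countable Y] [DecidableEq Y] [MeasurableSpace Y]
  [MeasurableSingletonClass Y]

lemma stmt17_card_bdd {n : ℕ} :
    Stmt17BddDiff (fun ω : Fin n → Y => ((Finset.univ.image ω).card : ℝ)) := by
  intro ω i y
  have h1 : Finset.univ.image (Function.update ω i y) ⊆ insert y (Finset.univ.image ω) := by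
    intro a ha
    rw [Finset.mem_image] at ha
    obtain ⟨j, -, rfl⟩ := ha
    rcases eq_or_ne j i with rfl | hne
    · simp
    · rw [Function.update_of_ne hne]
      exact Finset.mem_insert_of_mem (Finset.mem_image_of_mem _ (Finset.mem_univ _))
  have h2 : Finset.univ.image ω ⊆ insert (ω i) (Finset.univ.image (Function.update ω i y)) := by
    intro a ha
    rw [Finset.mem_image] at ha
    obtain ⟨j, -, rfl⟩ := ha
    rcases eq_or_ne j i with rfl | hne
    · exact Finset.mem_insert_self _ _
    · have : ω j = Function.update ω i y j := (Function.update_of_ne hne y ω).symm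
      rw [this]
      exact Finset.mem_insert_of_mem (Finset.mem_image_of_mem _ (Finset.mem_univ _))
  have c1 : (Finset.univ.image (Function.update ω i y)).card ≤ (Finset.univ.image ω).card + 1 :=
    le_trans (Finset.card_le_card h1) (Finset.card_insert_le _ _)
  have c2 : (Finset.univ.image ω).card ≤ (Finset.univ.image (Function.update ω i y)).card + 1 :=
    le_trans (Finset.card_le_card h2) (Finset.card_insert_le _ _)
  rw [abs_sub_le_iff]
  constructor
  · have : ((Finset.univ.image (Function.update ω i y)).card : ℝ)
        ≤ (Finset.univ.image ω).card + 1 := by exact_mod_cast c1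
    linarith
  · have : ((Finset.univ.image ω).card : ℝ)
        ≤ (Finset.univ.image (Function.update ω i y)).card + 1 := by exact_mod_cast c2
    linarith

lemma stmt17_bad1_null (p : PMF Y) (n : ℕ) :
    (Measure.pi fun _ : Fin n => p.toMeasure) {ω : Fin n → Y | ∃ i, ω i ∉ p.support} = 0 := by
  have h1 : {ω : Fin n → Y | ∃ i, ω i ∉ p.support}
      = ⋃ i, {ω : Fin n → Y | ω i ∈ p.supportᶜ} := by
    ext ω; simp
  rw [h1]
  apply measure_iUnion_null
  intro i
  have h2 : {ω : Fin n → Y | ω i ∈ p.supportᶜ}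
      = Set.pi Set.univ (fun j => if j = i then p.supportᶜ else Set.univ) := by
    ext ω
    constructor
    · intro h j _
      by_cases hj : j = i
      · subst hj; simpa using h
      · simp [hj]
    · intro h
      have := h i (Set.mem_univ i)
      simpa using this
  rw [h2, Measure.pi_pi]
  apply Finset.prod_eq_zero (Finset.mem_univ i)
  have hsupp : p.toMeasure p.supportᶜ = 0 := by
    rw [p.toMeasure_apply_eq_zero_iff (p.support.to_countable.measurableSet.compl)]
    exact disjoint_compl_right
  simp [hsupp]

lemma stmt17_mean_lb (p : PMF Y) (hfin : p.support.Finite) (κ : ℝ) (hκ : 1 ≤ κ)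
    (hmin : ∀ a ∈ p.support, 1 / κ ≤ (p a).toReal) (n : ℕ) (hn : 0 < n) :
    (hfin.toFinset.card : ℝ) * (1 - Real.exp (-(n : ℝ) / κ))
      ≤ ∫ ω, ((Finset.univ.image ω).card : ℝ) ∂(Measure.pi fun _ : Fin n => p.toMeasure) := by
  set μ := Measure.pi fun _ : Fin n => p.toMeasure with hμ
  set T := hfin.toFinset with hT
  have hn' : (0:ℝ) < n := Nat.cast_pos.2 hn
  have hκ0 : (0:ℝ) < κ := lt_of_lt_of_le one_pos hκ
  have hintf : Integrable (fun ω : Fin n → Y => ((Finset.univ.image ω).card : ℝ)) μ := by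
    refine stmt17_int_bdd μ (measurable_of_countable _) n fun ω => ?_
    rw [abs_of_nonneg (by positivity)]
    exact_mod_cast le_trans (Finset.card_image_le) (by simp)
  -- per-symbol probability bound
  have key : ∀ a ∈ T, 1 - Real.exp (-(n : ℝ) / κ)
      ≤ (μ {ω : Fin n → Y | a ∈ Finset.univ.image ω}).toReal := by
    intro a ha
    have hasupp : a ∈ p.support := hfin.mem_toFinset.1 ha
    have hAmeas : MeasurableSet {ω : Fin n → Y | a ∈ Finset.univ.image ω} :=
      (Set.to_countable _).measurableSet
    have hcompl : {ω : Fin n → Y | a ∈ Finset.univ.image ω}ᶜ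
        = Set.pi Set.univ (fun _ : Fin n => ({a}ᶜ : Set Y)) := by
      ext ω
      simp [Finset.mem_image, Set.mem_pi]
    have hν : p.toMeasure ({a}ᶜ : Set Y) = 1 - p a := by
      rw [measure_compl (measurableSet_singleton a) (measure_ne_top _ _), measure_univ,
        PMF.toMeasure_apply_singleton _ _ (measurableSet_singleton a)]
    have hμcompl : μ ({ω : Fin n → Y | a ∈ Finset.univ.image ω}ᶜ) = (1 - p a) ^ n := by
      rw [hcompl, Measure.pi_pi]
      simp [hν]
    set t := (p a).toReal with ht
    have hpa1 : p a ≤ 1 := p.coe_le_one a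
    have ht0 : 0 ≤ t := ENNReal.toReal_nonneg
    have ht1 : t ≤ 1 := by
      have := ENNReal.toReal_mono ENNReal.one_ne_top hpa1
      simpa using this
    have h1pa : ((1 : ℝ≥0∞) - p a).toReal = 1 - t := by
      rw [ENNReal.toReal_sub_of_le hpa1 ENNReal.one_ne_top]; simp [ht]
    have hsum := measure_add_measure_compl (μ := μ) hAmeas
    have hfin1 : μ {ω : Fin n → Y | a ∈ Finset.univ.image ω} ≠ ⊤ := measure_ne_top _ _
    have hfin2 : μ ({ω : Fin n → Y | a ∈ Finset.univ.image ω}ᶜ) ≠ ⊤ := measure_ne_top _ _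
    have hsumR : (μ {ω : Fin n → Y | a ∈ Finset.univ.image ω}).toReal + (1 - t) ^ n = 1 := by
      have := congrArg ENNReal.toReal hsum
      rw [ENNReal.toReal_add hfin1 hfin2, hμcompl, ENNReal.toReal_pow, h1pa] at this
      simpa using this
    have hexp : (1 - t) ^ n ≤ Real.exp (-(n : ℝ) / κ) := by
      have e1 : (1 - t) ^ n ≤ Real.exp (-t) ^ n := by
        apply pow_le_pow_left₀ (by linarith)
        linarith [Real.add_one_le_exp (-t)]
      have e2 : Real.exp (-t) ^ n = Real.exp (-(t * n)) := by
        rw [← Real.exp_nat_mul]; ring_nf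
      have h1κ : 1 / κ ≤ t := hmin a hasupp
      have e3 : -(t * n) ≤ -(n : ℝ) / κ := by
        rw [neg_div, neg_le_neg_iff, div_eq_mul_one_div]
        calc (n : ℝ) * (1 / κ) ≤ (n : ℝ) * t := by
              exact mul_le_mul_of_nonneg_left h1κ hn'.le
          _ = t * n := by ring
      calc (1 - t) ^ n ≤ Real.exp (-t) ^ n := e1
        _ = Real.exp (-(t * n)) := e2
        _ ≤ Real.exp (-(n : ℝ) / κ) := Real.exp_le_exp.2 e3
    linarith
  -- pointwise bound by indicator sum
  have hptw : ∀ ω : Fin n → Y,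
      (∑ a ∈ T, Set.indicator {ω : Fin n → Y | a ∈ Finset.univ.image ω} (fun _ => (1:ℝ)) ω)
        ≤ ((Finset.univ.image ω).card : ℝ) := by
    intro ω
    have h1 : (∑ a ∈ T, Set.indicator {ω : Fin n → Y | a ∈ Finset.univ.image ω}
        (fun _ => (1:ℝ)) ω)
        = ((T.filter (fun a => a ∈ Finset.univ.image ω)).card : ℝ) := by
      rw [← Finset.sum_boole]
      apply Finset.sum_congr rfl
      intro a _
      simp [Set.indicator_apply]
    rw [h1]
    have h2 : (T.filter (fun a => a ∈ Finset.univ.image ω)) ⊆ Finset.univ.image ω :=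
      fun x hx => (Finset.mem_filter.1 hx).2
    exact_mod_cast Finset.card_le_card h2
  have hindint : ∀ a ∈ T, Integrable
      (Set.indicator {ω : Fin n → Y | a ∈ Finset.univ.image ω} (fun _ => (1:ℝ))) μ :=
    fun a _ => (integrable_const (1:ℝ)).indicator (Set.to_countable _).measurableSet
  calc (T.card : ℝ) * (1 - Real.exp (-(n : ℝ) / κ))
      = ∑ _a ∈ T, (1 - Real.exp (-(n : ℝ) / κ)) := by
        rw [Finset.sum_const, nsmul_eq_mul]
    _ ≤ ∑ a ∈ T, (μ {ω : Fin n → Y | a ∈ Finset.univ.image ω}).toReal :=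
        Finset.sum_le_sum key
    _ = ∑ a ∈ T, ∫ ω, Set.indicator {ω : Fin n → Y | a ∈ Finset.univ.image ω}
          (fun _ => (1:ℝ)) ω ∂μ := by
        apply Finset.sum_congr rfl
        intro a _
        rw [integral_indicator_const (1:ℝ) (Set.to_countable _).measurableSet]
        simp [Measure.real]
    _ = ∫ ω, (∑ a ∈ T, Set.indicator {ω : Fin n → Y | a ∈ Finset.univ.image ω}
          (fun _ => (1:ℝ)) ω) ∂μ := (integral_finset_sum T hindint).symm
    _ ≤ ∫ ω, ((Finset.univ.image ω).card : ℝ) ∂μ := by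
        apply integral_mono (integrable_finset_sum T hindint) hintf hptw

end Stats

open MeasureTheory Real

/-- Confidence interval for the support size: with probability at least `1 − δ`,
`Ŝ(n) ≤ S(P) ≤ (Ŝ(n) + √((n/2)·log(1/δ)))·(1 − e^{−n/κ})⁻¹`. -/
theorem stmt_17 {Y : Type*} [Countable Y] [DecidableEq Y] [MeasurableSpace Y]
    [MeasurableSingletonClass Y] (p : PMF Y) (hfin : p.support.Finite)
    (κ : ℝ) (hκ : 1 ≤ κ) (hmin : ∀ a ∈ p.support, 1 / κ ≤ (p a).toReal)
    (n : ℕ) (hn : 0 < n) (δ : ℝ) (hδ0 : 0 < δ) (hδ1 : δ < 1) :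
    1 - δ ≤
      ((Measure.pi fun _ : Fin n => p.toMeasure)
        {ω : Fin n → Y |
          (Finset.univ.image ω).card ≤ hfin.toFinset.card
          ∧ (hfin.toFinset.card : ℝ)
              ≤ (((Finset.univ.image ω).card : ℝ)
                    + Real.sqrt ((n / 2) * Real.log (1 / δ)))
                  * (1 - Real.exp (-(n : ℝ) / κ))⁻¹}).toReal := by
  classical
  set μ := Measure.pi fun _ : Fin n => p.toMeasure with hμ
  set f : (Fin n → Y) → ℝ := fun ω => ((Finset.univ.image ω).card : ℝ) with hf
  set m := ∫ z, f z ∂μ with hm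
  set ε := Real.sqrt ((n / 2) * Real.log (1 / δ)) with hε
  set q := Real.exp (-(n : ℝ) / κ) with hq
  set S := hfin.toFinset.card with hS
  have hκ0 : (0:ℝ) < κ := lt_of_lt_of_le one_pos hκ
  have hn' : (0:ℝ) < n := Nat.cast_pos.2 hn
  have hL : 0 < Real.log (1 / δ) := Real.log_pos (by rw [lt_div_iff₀ hδ0]; linarith)
  have hε0 : 0 ≤ ε := Real.sqrt_nonneg _
  have hε2 : ε ^ 2 = (n / 2) * Real.log (1 / δ) := Real.sq_sqrt (by positivity)
  have hq1 : q < 1 := by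
    rw [hq, Real.exp_lt_one_iff]
    apply div_neg_of_neg_of_pos _ hκ0
    simpa using hn'
  have h1q : 0 < 1 - q := by linarith
  -- tail bound
  have htail := stmt17_tail p n hn f stmt17_card_bdd ε hε0
  rw [← hμ, ← hm] at htail
  have hexpδ : Real.exp (-2 * ε ^ 2 / n) = δ := by
    have harg : -2 * ε ^ 2 / n = Real.log δ := by
      rw [hε2, one_div, Real.log_inv]
      field_simp
    rw [harg, Real.exp_log hδ0]
  rw [hexpδ] at htail
  -- mean lower bound
  have hmean := stmt17_mean_lb p hfin κ hκ hmin n hn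
  rw [← hμ] at hmean
  have hmean' : (S : ℝ) * (1 - q) ≤ m := hmean
  -- bad sets
  have hsub : {ω : Fin n → Y |
      (Finset.univ.image ω).card ≤ S
      ∧ (S : ℝ) ≤ (((Finset.univ.image ω).card : ℝ) + ε) * (1 - q)⁻¹}ᶜ
      ⊆ {ω : Fin n → Y | ∃ i, ω i ∉ p.support} ∪ {ω : Fin n → Y | ε ≤ m - f ω} := by
    intro ω hω
    by_contra hcon
    rw [Set.mem_union] at hcon
    push_neg at hcon
    obtain ⟨h1, h2⟩ := hcon
    simp only [Set.mem_setOf_eq, not_exists, not_not] at h1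
    simp only [Set.mem_setOf_eq, not_le] at h2
    apply hω
    constructor
    · apply Finset.card_le_card
      intro a ha
      rw [Finset.mem_image] at ha
      obtain ⟨j, -, rfl⟩ := ha
      exact hfin.mem_toFinset.2 (h1 j)
    · rw [← div_eq_mul_inv, le_div_iff₀ h1q]
      have : m < f ω + ε := by linarith
      calc (S : ℝ) * (1 - q) ≤ m := hmean'
        _ ≤ ((Finset.univ.image ω).card : ℝ) + ε := by simp only [hf] at this; linarith
  -- combine
  have hbad2 : MeasurableSet {ω : Fin n → Y | ε ≤ m - f ω} :=
    (Set.to_countable _).measurableSet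
  have hgood : MeasurableSet {ω : Fin n → Y |
      (Finset.univ.image ω).card ≤ S
      ∧ (S : ℝ) ≤ (((Finset.univ.image ω).card : ℝ) + ε) * (1 - q)⁻¹} :=
    (Set.to_countable _).measurableSet
  have h5 : μ ({ω : Fin n → Y |
      (Finset.univ.image ω).card ≤ S
      ∧ (S : ℝ) ≤ (((Finset.univ.image ω).card : ℝ) + ε) * (1 - q)⁻¹}ᶜ)
      ≤ μ {ω : Fin n → Y | ε ≤ m - f ω} := by
    calc μ _ ≤ μ ({ω : Fin n → Y | ∃ i, ω i ∉ p.support}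
          ∪ {ω : Fin n → Y | ε ≤ m - f ω}) := measure_mono hsub
      _ ≤ μ {ω : Fin n → Y | ∃ i, ω i ∉ p.support}
          + μ {ω : Fin n → Y | ε ≤ m - f ω} := measure_union_le _ _
      _ = μ {ω : Fin n → Y | ε ≤ m - f ω} := by
          rw [hμ, stmt17_bad1_null p n, zero_add]
  have h6 : (μ ({ω : Fin n → Y |
      (Finset.univ.image ω).card ≤ S
      ∧ (S : ℝ) ≤ (((Finset.univ.image ω).card : ℝ) + ε) * (1 - q)⁻¹}ᶜ)).toReal ≤ δ :=
    le_trans (ENNReal.toReal_mono (measure_ne_top _ _) h5) htail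
  have h7 := measure_add_measure_compl (μ := μ) hgood
  have h8 := congrArg ENNReal.toReal h7
  rw [ENNReal.toReal_add (measure_ne_top _ _) (measure_ne_top _ _)] at h8
  simp only [measure_univ, ENNReal.toReal_one] at h8
  linarith
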